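/- Suppose that for ℙ-almost every sample point the map λ ↦ L(X, Y, I, λ) is nonincreasing on [0, ∞), where (X, Y, I) has the common distribution of the sample. Then Err_δ(λ, ε) := ℙ( ∃ λ' ∈ [0, λ] : L(X, Y, I, λ') ≤ δ < L(X, Y, I, λ + ε) ) = 0 for every λ ≥ 0 and ε > 0. Consequently, the step-up procedure is exactly valid: with S̃_j := inf{λ > 0 : L(X_j, Y_j, I_j, λ) ≤ δ}, k := ⌈(1−α)(n+1)⌉ ≤ n, and λ̂^up the k-th smallest of S̃_1, …, S̃_n, one has ℙ( L(X_{n+1}, Y_{n+1}, I_{n+1}, λ̂^up + ε) ≤ δ ) ≥ 1 − α for every ε > 0. -/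

import Mathlib

open MeasureTheory ProbabilityTheory Set

/-- The False Probe Proportion (FPP) loss of the threshold predictive set `C^s_λ(x)`
on an instance `z = (x, y, I)`. -/
noncomputable def fpp {𝒳 𝒴 ι : Type*} [Fintype ι]
    (φ : ι → 𝒴 → ℝ) (s : ι → 𝒳 → ℝ) (z : 𝒳 × 𝒴 × Finset ι) (lam : ℝ) : ℝ :=
  (Nat.card {i : ι // i ∈ z.2.2 ∧ lam < -(φ i z.2.1) * s i z.1} : ℝ) /
    max 1 (Nat.card {i : ι // i ∈ z.2.2 ∧ lam < |s i z.1|} : ℝ)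

/-- The `k`-th smallest value (k-th order statistic, `1 ≤ k ≤ n`) among `v 0, …, v (n-1)`. -/
noncomputable def kthSmallest {n : ℕ} (v : Fin n → ℝ) (k : ℕ) : ℝ :=
  sInf {t : ℝ | k ≤ Nat.card {j : Fin n // v j ≤ t}}

open scoped ENNReal

lemma natCard_eq_filter {ι : Type*} [Fintype ι] (p : ι → Prop) [DecidablePred p] :
    Nat.card {i // p i} = (Finset.univ.filter p).card := by
  classical
  rw [Nat.card_eq_fintype_card, Fintype.card_subtype]

lemma exists_gap {ι : Type*} [Fintype ι] (c : ι → ℝ) (lam : ℝ) :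
    ∃ η > 0, ∀ i, lam < c i → lam + η ≤ c i := by
  classical
  rcases (Finset.univ.filter (fun i => lam < c i)).eq_empty_or_nonempty with h | h
  · refine ⟨1, one_pos, fun i hi => absurd ?_ (by simp [h] : i ∉ Finset.univ.filter (fun i => lam < c i))⟩
    exact Finset.mem_filter.2 ⟨Finset.mem_univ i, hi⟩
  · obtain ⟨i0, hi0, hmin⟩ := Finset.exists_min_image _ c h
    have h0 : lam < c i0 := (Finset.mem_filter.1 hi0).2
    exact ⟨c i0 - lam, by linarith, fun i hi => by
      have := hmin i (Finset.mem_filter.2 ⟨Finset.mem_univ i, hi⟩); linarith⟩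

lemma fpp_right_const {𝒳 𝒴 ι : Type*} [Fintype ι] (φ : ι → 𝒴 → ℝ) (s : ι → 𝒳 → ℝ)
    (z : 𝒳 × 𝒴 × Finset ι) (lam : ℝ) :
    ∃ η > 0, ∀ q, lam ≤ q → q < lam + η → fpp φ s z q = fpp φ s z lam := by
  obtain ⟨η₁, h1p, h1⟩ := exists_gap (fun i => -(φ i z.2.1) * s i z.1) lam
  obtain ⟨η₂, h2p, h2⟩ := exists_gap (fun i => |s i z.1|) lam
  refine ⟨min η₁ η₂, lt_min h1p h2p, fun q hq hq' => ?_⟩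
  have key : ∀ (c : ι → ℝ) (η : ℝ), min η₁ η₂ ≤ η → (∀ i, lam < c i → lam + η ≤ c i) →
      ∀ i, (q < c i ↔ lam < c i) := by
    intro c η hle hgap i
    constructor
    · intro h; linarith
    · intro h; have := hgap i h
      have : lam + min η₁ η₂ ≤ c i := by linarith
      linarith
  have e1 : Nat.card {i : ι // i ∈ z.2.2 ∧ q < -(φ i z.2.1) * s i z.1}
      = Nat.card {i : ι // i ∈ z.2.2 ∧ lam < -(φ i z.2.1) * s i z.1} :=
    Nat.card_congr (Equiv.subtypeEquivRight fun i => by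
      rw [key _ η₁ (min_le_left _ _) h1 i])
  have e2 : Nat.card {i : ι // i ∈ z.2.2 ∧ q < |s i z.1|}
      = Nat.card {i : ι // i ∈ z.2.2 ∧ lam < |s i z.1|} :=
    Nat.card_congr (Equiv.subtypeEquivRight fun i => by
      rw [key _ η₂ (min_le_right _ _) h2 i])
  rw [fpp, fpp, e1, e2]

lemma fpp_set_nonempty {𝒳 𝒴 ι : Type*} [Fintype ι] (φ : ι → 𝒴 → ℝ) (s : ι → 𝒳 → ℝ)
    (hφ : ∀ i y, φ i y = 1 ∨ φ i y = -1) {δ : ℝ} (hδ : 0 ≤ δ) (z : 𝒳 × 𝒴 × Finset ι) :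
    ∃ lam : ℝ, 0 < lam ∧ fpp φ s z lam ≤ δ := by
  classical
  set lam : ℝ := 1 + ∑ i : ι, |s i z.1| with hlam
  have hpos : 0 < lam := by
    have : (0:ℝ) ≤ ∑ i : ι, |s i z.1| := Finset.sum_nonneg fun i _ => abs_nonneg _
    linarith
  refine ⟨lam, hpos, ?_⟩
  have hempty : IsEmpty {i : ι // i ∈ z.2.2 ∧ lam < -(φ i z.2.1) * s i z.1} := by
    refine ⟨fun ⟨i, _, hi⟩ => ?_⟩
    have habs : |(-(φ i z.2.1)) * s i z.1| = |s i z.1| := by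
      rcases hφ i z.2.1 with h | h <;> simp [h, abs_mul]
    have hle : -(φ i z.2.1) * s i z.1 ≤ |s i z.1| := habs ▸ le_abs_self _
    have hsum : |s i z.1| ≤ ∑ j : ι, |s j z.1| :=
      Finset.single_le_sum (fun j _ => abs_nonneg (s j z.1)) (Finset.mem_univ i)
    rw [hlam] at hi; linarith
  rw [fpp, Nat.card_of_isEmpty]
  simpa using hδ

noncomputable def Tstat {𝒳 𝒴 ι : Type*} [Fintype ι] (φ : ι → 𝒴 → ℝ) (s : ι → 𝒳 → ℝ)
    (δ : ℝ) (z : 𝒳 × 𝒴 × Finset ι) : ℝ :=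
  sInf {lam : ℝ | 0 < lam ∧ fpp φ s z lam ≤ δ}

lemma Tstat_bddBelow {𝒳 𝒴 ι : Type*} [Fintype ι] (φ : ι → 𝒴 → ℝ) (s : ι → 𝒳 → ℝ)
    (δ : ℝ) (z : 𝒳 × 𝒴 × Finset ι) :
    BddBelow {lam : ℝ | 0 < lam ∧ fpp φ s z lam ≤ δ} :=
  ⟨0, fun lam hlam => le_of_lt hlam.1⟩

lemma Tstat_lt_iff {𝒳 𝒴 ι : Type*} [Fintype ι] {φ : ι → 𝒴 → ℝ} {s : ι → 𝒳 → ℝ}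
    (hφ : ∀ i y, φ i y = 1 ∨ φ i y = -1) {δ : ℝ} (hδ : 0 ≤ δ)
    (z : 𝒳 × 𝒴 × Finset ι) (t : ℝ) :
    Tstat φ s δ z < t ↔ ∃ lam, 0 < lam ∧ fpp φ s z lam ≤ δ ∧ lam < t := by
  have hne : {lam : ℝ | 0 < lam ∧ fpp φ s z lam ≤ δ}.Nonempty := by
    obtain ⟨lam, h1, h2⟩ := fpp_set_nonempty φ s hφ hδ z
    exact ⟨lam, h1, h2⟩
  rw [Tstat, csInf_lt_iff (Tstat_bddBelow φ s δ z) hne]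
  constructor
  · rintro ⟨lam, ⟨h1, h2⟩, h3⟩; exact ⟨lam, h1, h2, h3⟩
  · rintro ⟨lam, h1, h2, h3⟩; exact ⟨lam, ⟨h1, h2⟩, h3⟩

lemma Tstat_lt_iff_rat {𝒳 𝒴 ι : Type*} [Fintype ι] {φ : ι → 𝒴 → ℝ} {s : ι → 𝒳 → ℝ}
    (hφ : ∀ i y, φ i y = 1 ∨ φ i y = -1) {δ : ℝ} (hδ : 0 ≤ δ)
    (z : 𝒳 × 𝒴 × Finset ι) (t : ℝ) :
    Tstat φ s δ z < t ↔ ∃ q : ℚ, 0 < (q:ℝ) ∧ fpp φ s z q ≤ δ ∧ (q:ℝ) < t := by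
  rw [Tstat_lt_iff hφ hδ]
  constructor
  · rintro ⟨lam, h1, h2, h3⟩
    obtain ⟨η, hη, hconst⟩ := fpp_right_const φ s z lam
    obtain ⟨q, hq1, hq2⟩ := exists_rat_btwn (lt_min h3 (by linarith : lam < lam + η))
    refine ⟨q, by linarith [lt_min_iff.1 hq2], ?_, (lt_min_iff.1 hq2).1⟩
    rw [hconst q (le_of_lt hq1) (lt_min_iff.1 hq2).2]
    exact h2
  · rintro ⟨q, h1, h2, h3⟩; exact ⟨q, h1, h2, h3⟩

lemma measurable_count {𝒳 𝒴 ι : Type*} [Fintype ι] [MeasurableSpace 𝒳] [MeasurableSpace 𝒴]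
    [MeasurableSpace (Finset ι)] [MeasurableSingletonClass (Finset ι)]
    (c : ι → (𝒳 × 𝒴 × Finset ι) → ℝ) (hc : ∀ i, Measurable (c i)) (lam : ℝ) :
    Measurable (fun z : 𝒳 × 𝒴 × Finset ι =>
      (Nat.card {i : ι // i ∈ z.2.2 ∧ lam < c i z} : ℝ)) := by
  classical
  have : ∀ z : 𝒳 × 𝒴 × Finset ι, (Nat.card {i : ι // i ∈ z.2.2 ∧ lam < c i z} : ℝ)
      = ∑ i : ι, if i ∈ z.2.2 ∧ lam < c i z then (1:ℝ) else 0 := by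
    intro z
    rw [natCard_eq_filter, Finset.sum_boole]
  simp_rw [this]
  apply Finset.measurable_sum
  intro i _
  apply Measurable.ite _ measurable_const measurable_const
  have h1 : MeasurableSet {z : 𝒳 × 𝒴 × Finset ι | i ∈ z.2.2} := by
    have : {z : 𝒳 × 𝒴 × Finset ι | i ∈ z.2.2}
        = (fun z : 𝒳 × 𝒴 × Finset ι => z.2.2) ⁻¹' {I : Finset ι | i ∈ I} := rfl
    rw [this]
    exact (measurable_snd.comp measurable_snd) (Set.to_countable _).measurableSet
  have h2 : MeasurableSet {z : 𝒳 × 𝒴 × Finset ι | lam < c i z} :=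
    measurableSet_lt measurable_const (hc i)
  exact h1.inter h2

lemma measurable_fpp {𝒳 𝒴 ι : Type*} [Fintype ι] [MeasurableSpace 𝒳] [MeasurableSpace 𝒴]
    [MeasurableSpace (Finset ι)] [MeasurableSingletonClass (Finset ι)]
    {φ : ι → 𝒴 → ℝ} {s : ι → 𝒳 → ℝ}
    (hφmeas : ∀ i, Measurable (φ i)) (hsmeas : ∀ i, Measurable (s i)) (lam : ℝ) :
    Measurable (fun z : 𝒳 × 𝒴 × Finset ι => fpp φ s z lam) := by
  have hm1 : ∀ i, Measurable (fun z : 𝒳 × 𝒴 × Finset ι => -(φ i z.2.1) * s i z.1) :=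
    fun i => (((hφmeas i).comp (measurable_fst.comp measurable_snd)).neg).mul
      ((hsmeas i).comp measurable_fst)
  have hm2 : ∀ i, Measurable (fun z : 𝒳 × 𝒴 × Finset ι => |s i z.1|) :=
    fun i => ((hsmeas i).comp measurable_fst).abs
  exact (measurable_count _ hm1 lam).div
    (measurable_const.max (measurable_count _ hm2 lam))

lemma measurable_Tstat {𝒳 𝒴 ι : Type*} [Fintype ι] [MeasurableSpace 𝒳] [MeasurableSpace 𝒴]
    [MeasurableSpace (Finset ι)] [MeasurableSingletonClass (Finset ι)]
    {φ : ι → 𝒴 → ℝ} {s : ι → 𝒳 → ℝ}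
    (hφ : ∀ i y, φ i y = 1 ∨ φ i y = -1)
    (hφmeas : ∀ i, Measurable (φ i)) (hsmeas : ∀ i, Measurable (s i))
    {δ : ℝ} (hδ : 0 ≤ δ) :
    Measurable (Tstat φ s δ) := by
  apply measurable_of_Iio
  intro t
  have : Tstat φ s δ ⁻¹' Iio t
      = ⋃ q : ℚ, {z : 𝒳 × 𝒴 × Finset ι | 0 < (q:ℝ) ∧ fpp φ s z q ≤ δ ∧ (q:ℝ) < t} := by
    ext z
    simp only [mem_preimage, mem_Iio, mem_iUnion, mem_setOf_eq]
    rw [Tstat_lt_iff_rat hφ hδ]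
  rw [this]
  apply MeasurableSet.iUnion
  intro q
  by_cases h0 : 0 < (q:ℝ)
  · by_cases h1 : (q:ℝ) < t
    · have : {z : 𝒳 × 𝒴 × Finset ι | 0 < (q:ℝ) ∧ fpp φ s z q ≤ δ ∧ (q:ℝ) < t}
          = {z | fpp φ s z q ≤ δ} := by ext z; simp [h0, h1]
      rw [this]
      exact measurableSet_le (measurable_fpp hφmeas hsmeas _) measurable_const
    · simp [h1]
  · simp [h0]

lemma rank_count_bound {N k : ℕ} (t : Fin N → ℝ) (hk : k ≤ N) :
    k ≤ (Finset.univ.filter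
      (fun m => (Finset.univ.filter (fun j => t j < t m)).card < k)).card := by
  classical
  rcases Nat.eq_zero_or_pos k with rfl | hkpos
  · exact Nat.zero_le _
  have hN : 0 < N := lt_of_lt_of_le hkpos hk
  set e : Fin N → Lex (ℝ × Fin N) := fun m => toLex (t m, m) with he
  have heinj : Function.Injective e := by
    intro a b hab
    have := congrArg (fun x => (ofLex x).2) hab
    simpa [he] using this
  set r : Fin N → ℕ := fun m => (Finset.univ.filter (fun j => e j < e m)).card with hr
  have hrmono : ∀ a b : Fin N, e a < e b → r a < r b := by
    intro a b hab
    apply Finset.card_lt_card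
    rw [Finset.ssubset_iff_of_subset
      (Finset.monotone_filter_right _ (fun j _ (hj : e j < e a) => lt_trans hj hab))]
    exact ⟨a, Finset.mem_filter.2 ⟨Finset.mem_univ a, hab⟩,
      fun hmem => absurd (Finset.mem_filter.1 hmem).2 (lt_irrefl _)⟩
  have hinj : Function.Injective r := by
    intro a b hab
    by_contra hne
    rcases lt_or_gt_of_ne (fun h : e a = e b => hne (heinj h)) with h | h
    · exact absurd hab (Nat.ne_of_lt (hrmono a b h))
    · exact absurd hab.symm (Nat.ne_of_lt (hrmono b a h))
  have hlt : ∀ m, r m < N := by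
    intro m
    have hsub : Finset.univ.filter (fun j => e j < e m) ⊆ Finset.univ.erase m := by
      intro j hj
      refine Finset.mem_erase.2 ⟨?_, Finset.mem_univ j⟩
      intro hjm
      exact absurd ((Finset.mem_filter.1 hj).2) (by rw [hjm]; exact lt_irrefl _)
    calc r m ≤ (Finset.univ.erase m).card := Finset.card_le_card hsub
    _ = N - 1 := by rw [Finset.card_erase_of_mem (Finset.mem_univ m)]; simp
    _ < N := Nat.sub_lt (Nat.pos_of_ne_zero (fun h => Nat.not_lt_zero (m:ℕ) (by omega))) one_pos
  set g : Fin N → Fin N := fun m => ⟨r m, hlt m⟩ with hg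
  have hginj : Function.Injective g := fun a b hab => hinj (congrArg Fin.val hab)
  have hgbij : Function.Bijective g := (Finite.injective_iff_bijective).1 hginj
  -- card of {m | r m < k} equals card of {i | i < k} equals k
  have hcard1 : (Finset.univ.filter (fun m => r m < k)).card
      = (Finset.univ.filter (fun i : Fin N => (i : ℕ) < k)).card := by
    apply Finset.card_bij (fun m _ => g m)
    · intro m hm
      simp only [Finset.mem_filter, Finset.mem_univ, true_and] at *
      exact hm
    · intro a ha b hb hab
      exact hginj hab
    · intro i hi
      obtain ⟨m, hm⟩ := hgbij.2 i
      refine ⟨m, ?_, hm⟩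
      simp only [Finset.mem_filter, Finset.mem_univ, true_and] at *
      rw [← hm] at hi
      exact hi
  have hcard2 : (Finset.univ.filter (fun i : Fin N => (i : ℕ) < k)).card = k := by
    have : (Finset.univ.filter (fun i : Fin N => (i : ℕ) < k)).card = (Finset.range k).card :=
      Finset.card_nbij' (fun i : Fin N => (i : ℕ))
        (fun j : ℕ => if h : j < N then (⟨j, h⟩ : Fin N) else ⟨0, hN⟩)
        (fun i hi => Finset.mem_range.2 ((Finset.mem_filter.1 hi).2))
        (fun j hj => by
          have hjk : j < k := Finset.mem_range.1 hj
          have hjN : j < N := lt_of_lt_of_le hjk hk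
          simp only [hjN, dif_pos, Finset.mem_filter, Finset.mem_univ, true_and]
          simpa using hjk)
        (fun i hi => by simp [i.isLt])
        (fun j hj => by
          have hjN : j < N := lt_of_lt_of_le (Finset.mem_range.1 hj) hk
          simp [hjN])
    rw [this, Finset.card_range]
  have hsub2 : (Finset.univ.filter (fun m => r m < k))
      ⊆ (Finset.univ.filter (fun m => (Finset.univ.filter (fun j => t j < t m)).card < k)) := by
    apply Finset.monotone_filter_right
    intro m _ (hm : r m < k)
    have hcnt : (Finset.univ.filter (fun j => t j < t m)).card ≤ r m := by
      apply Finset.card_le_card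
      apply Finset.monotone_filter_right
      intro j _ (hj : t j < t m)
      exact Prod.Lex.lt_iff.2 (Or.inl hj)
    exact lt_of_le_of_lt hcnt hm
  calc k = (Finset.univ.filter (fun m => r m < k)).card := by rw [hcard1, hcard2]
  _ ≤ _ := Finset.card_le_card hsub2

lemma count_ge_bound {N k : ℕ} (t : Fin N → ℝ) (hk : k ≤ N) :
    (Finset.univ.filter
      (fun m => k ≤ (Finset.univ.filter (fun j => t j < t m)).card)).card ≤ N - k := by
  classical
  have h := Finset.card_filter_add_card_filter_not
    (s := (Finset.univ : Finset (Fin N)))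
    (p := fun m => (Finset.univ.filter (fun j => t j < t m)).card < k)
  have h2 := rank_count_bound t hk
  have hcompl : (Finset.univ.filter
      (fun m => ¬ (Finset.univ.filter (fun j => t j < t m)).card < k))
      = (Finset.univ.filter
      (fun m => k ≤ (Finset.univ.filter (fun j => t j < t m)).card)) := by
    apply Finset.filter_congr
    intro m _
    simp [not_lt]
  rw [hcompl] at h
  simp only [Finset.card_univ, Fintype.card_fin] at h
  omega

lemma le_kthSmallest_of_count {n k : ℕ} (hk1 : 1 ≤ k) (hkn : k ≤ n) (v : Fin n → ℝ) (T : ℝ)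
    (h : (Finset.univ.filter (fun j => v j < T)).card < k) :
    T ≤ kthSmallest v k := by
  classical
  apply le_csInf
  · -- nonempty: take the max of v
    have hn : 0 < n := lt_of_lt_of_le hk1 hkn
    have : Nonempty (Fin n) := ⟨⟨0, hn⟩⟩
    obtain ⟨j0, _, hmax⟩ := Finset.exists_max_image Finset.univ v ⟨⟨0, hn⟩, Finset.mem_univ _⟩
    refine ⟨v j0, ?_⟩
    show k ≤ Nat.card {j : Fin n // v j ≤ v j0}
    rw [natCard_eq_filter]
    have : Finset.univ.filter (fun j => v j ≤ v j0) = Finset.univ :=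
      Finset.filter_true_of_mem (fun j _ => hmax j (Finset.mem_univ j))
    rw [this, Finset.card_univ, Fintype.card_fin]
    exact hkn
  · intro t ht
    have hcard : k ≤ Nat.card {j : Fin n // v j ≤ t} := ht
    rw [natCard_eq_filter] at hcard
    by_contra hlt
    push_neg at hlt
    have hsub : Finset.univ.filter (fun j => v j ≤ t)
        ⊆ Finset.univ.filter (fun j => v j < T) :=
      Finset.monotone_filter_right _ (fun j _ (hj : v j ≤ t) => lt_of_le_of_lt hj hlt)
    exact absurd (le_trans hcard (Finset.card_le_card hsub)) (not_le.2 h)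

lemma pi_map_comp_equiv {β : Type*} [MeasurableSpace β] {N : ℕ} (μ : Measure β)
    [IsProbabilityMeasure μ] (σ : Fin N ≃ Fin N) :
    (Measure.pi (fun _ : Fin N => μ)).map (fun w => w ∘ σ) = Measure.pi (fun _ : Fin N => μ) := by
  have hmeas : Measurable (fun w : Fin N → β => w ∘ σ) :=
    measurable_pi_lambda _ (fun j => measurable_pi_apply (σ j))
  symm
  apply Measure.pi_eq
  intro B hB
  rw [Measure.map_apply hmeas (MeasurableSet.univ_pi hB)]
  have hpre : (fun w : Fin N → β => w ∘ σ) ⁻¹' (Set.univ.pi B)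
      = Set.univ.pi (fun j => B (σ.symm j)) := by
    ext w
    simp only [mem_preimage, Set.mem_pi, Set.mem_univ, true_implies, Function.comp_apply]
    constructor
    · intro h j; have := h (σ.symm j); rwa [Equiv.apply_symm_apply] at this
    · intro h j; have := h (σ j); rwa [Equiv.symm_apply_apply] at this
  rw [hpre, Measure.pi_pi]
  exact Equiv.prod_comp σ.symm (fun j => μ (B j))

/-- If the FPP loss is almost surely nonincreasing in the threshold `λ`, then
`Err_δ(λ, ε) = 0` for all `λ ≥ 0`, `ε > 0`, and the step-up procedure is exactly valid. -/
theorem step_up_exact_validity_of_monotone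
    {Ω : Type*} [MeasurableSpace Ω] (P : Measure Ω) [IsProbabilityMeasure P]
    {𝒳 𝒴 ι : Type*} [MeasurableSpace 𝒳] [MeasurableSpace 𝒴] [Fintype ι] [Nonempty ι]
    [MeasurableSpace (Finset ι)] [MeasurableSingletonClass (Finset ι)]
    (φ : ι → 𝒴 → ℝ) (hφ : ∀ i y, φ i y = 1 ∨ φ i y = -1)
    (hφmeas : ∀ i, Measurable (φ i))
    (s : ι → 𝒳 → ℝ) (hsmeas : ∀ i, Measurable (s i))
    (n : ℕ)
    -- the i.i.d. sample `(X_j, Y_j, I_j)` for `j = 1, …, n+1`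
    (Z : Fin (n + 1) → Ω → 𝒳 × 𝒴 × Finset ι)
    (hZmeas : ∀ j, Measurable (Z j))
    (hindep : iIndepFun Z P)
    (hident : ∀ j, IdentDistrib (Z j) (Z 0) P P)
    (δ : ℝ) (hδ : 0 ≤ δ)
    (α : ℝ) (hα : α ∈ Set.Ioo (0 : ℝ) 1)
    (hk : ⌈(1 - α) * (n + 1 : ℝ)⌉₊ ≤ n)
    -- for `ℙ`-almost every sample point, the loss is nonincreasing in `λ` on `[0, ∞)`
    -- (under the common distribution, represented by the test point)
    (hmono : ∀ᵐ ω ∂P, ∀ lam₁ lam₂, 0 ≤ lam₁ → lam₁ ≤ lam₂ →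
      fpp φ s (Z (Fin.last n) ω) lam₂ ≤ fpp φ s (Z (Fin.last n) ω) lam₁)
    -- the step-up nonconformity scores on the calibration sample
    (S : Ω → Fin n → ℝ)
    (hS : ∀ ω j, S ω j =
      sInf {lam : ℝ | 0 < lam ∧ fpp φ s (Z j.castSucc ω) lam ≤ δ})
    (lamhat : Ω → ℝ)
    (hlamhat : ∀ ω, lamhat ω = kthSmallest (S ω) ⌈(1 - α) * (n + 1 : ℝ)⌉₊)
    -- `Err lam eps = ℙ(∃ λ' ∈ [0, λ], L(X,Y,I,λ') ≤ δ < L(X,Y,I,λ+ε))`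
    (Err : ℝ → ℝ → ℝ)
    (hErr : ∀ lam eps, Err lam eps =
      (P {ω | ∃ lam', 0 ≤ lam' ∧ lam' ≤ lam ∧
        fpp φ s (Z (Fin.last n) ω) lam' ≤ δ ∧
        δ < fpp φ s (Z (Fin.last n) ω) (lam + eps)}).toReal) :
    (∀ lam ≥ (0 : ℝ), ∀ eps > (0 : ℝ), Err lam eps = 0) ∧
      ∀ eps > (0 : ℝ),
        1 - α ≤ (P {ω | fpp φ s (Z (Fin.last n) ω) (lamhat ω + eps) ≤ δ}).toReal := by
  classical
  obtain ⟨hα0, hα1⟩ := hα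
  have hMnull : P {ω | ¬ (∀ lam₁ lam₂, 0 ≤ lam₁ → lam₁ ≤ lam₂ →
      fpp φ s (Z (Fin.last n) ω) lam₂ ≤ fpp φ s (Z (Fin.last n) ω) lam₁)} = 0 :=
    ae_iff.1 hmono
  constructor
  · -- Part 1: Err = 0
    intro lam hlam eps heps
    rw [hErr]
    have hsub : {ω | ∃ lam', 0 ≤ lam' ∧ lam' ≤ lam ∧
        fpp φ s (Z (Fin.last n) ω) lam' ≤ δ ∧
        δ < fpp φ s (Z (Fin.last n) ω) (lam + eps)}
        ⊆ {ω | ¬ (∀ lam₁ lam₂, 0 ≤ lam₁ → lam₁ ≤ lam₂ →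
          fpp φ s (Z (Fin.last n) ω) lam₂ ≤ fpp φ s (Z (Fin.last n) ω) lam₁)} := by
      rintro ω ⟨lam', h0, hle, hfpp, hgt⟩ hmono'
      have := hmono' lam' (lam + eps) h0 (by linarith)
      linarith
    rw [measure_mono_null hsub hMnull]
    simp
  · -- Part 2: step-up validity
    intro eps heps
    set k := ⌈(1 - α) * (n + 1 : ℝ)⌉₊ with hkdef
    have hcpos : (0:ℝ) < (1 - α) * (n + 1 : ℝ) := by
      have : (0:ℝ) < (n:ℝ) + 1 := by positivity
      nlinarith
    have hk1 : 1 ≤ k := Nat.one_le_iff_ne_zero.2 (by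
      intro h
      have := Nat.ceil_pos.2 hcpos
      omega)
    have hkn1 : k ≤ n + 1 := le_trans hk (Nat.le_succ n)
    set T : 𝒳 × 𝒴 × Finset ι → ℝ := Tstat φ s δ with hTdef
    have hT : Measurable T := measurable_Tstat hφ hφmeas hsmeas hδ
    set μ := P.map (Z 0) with hμ
    haveI : IsProbabilityMeasure μ := Measure.isProbabilityMeasure_map (hZmeas 0).aemeasurable
    set ν := Measure.pi (fun _ : Fin (n+1) => μ) with hν
    set F : Ω → (Fin (n+1) → (𝒳 × 𝒴 × Finset ι)) := fun ω j => Z j ω with hF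
    have hFmeas : Measurable F := measurable_pi_lambda _ hZmeas
    have hjoint : ν = P.map F := by
      rw [hν]
      apply Measure.pi_eq
      intro B hB
      rw [Measure.map_apply hFmeas (MeasurableSet.univ_pi hB)]
      have hpre : F ⁻¹' (Set.univ.pi B) = ⋂ j, Z j ⁻¹' B j := by
        ext ω
        simp [hF, Set.mem_pi]
      rw [hpre, hindep.meas_iInter (fun j => ⟨B j, hB j, rfl⟩)]
      apply Finset.prod_congr rfl
      intro j _
      rw [← Measure.map_apply (hZmeas j) (hB j), (hident j).map_eq]
    set cnt : (Fin (n+1) → (𝒳 × 𝒴 × Finset ι)) → Fin (n+1) → ℕ :=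
      fun w m => (Finset.univ.filter (fun j => T (w j) < T (w m))).card with hcnt
    have hcntmeas : ∀ m, Measurable (fun w => cnt w m) := by
      intro m
      have : (fun w => cnt w m)
          = fun w => ∑ j : Fin (n+1), if T (w j) < T (w m) then 1 else 0 := by
        funext w
        rw [hcnt]
        exact Finset.card_filter _ _
      rw [this]
      apply Finset.measurable_sum
      intro j _
      exact Measurable.ite (measurableSet_lt (hT.comp (measurable_pi_apply j))
        (hT.comp (measurable_pi_apply m))) measurable_const measurable_const
    set Bset : Fin (n+1) → Set (Fin (n+1) → (𝒳 × 𝒴 × Finset ι)) := fun m => {w | k ≤ cnt w m} with hBset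
    have hBmeas : ∀ m, MeasurableSet (Bset m) :=
      fun m => (hcntmeas m) (Set.to_countable {x : ℕ | k ≤ x}).measurableSet
    have hswap : ∀ m, ν (Bset m) = ν (Bset (Fin.last n)) := by
      intro m
      set σ := Equiv.swap m (Fin.last n) with hσ
      have hmeascomp : Measurable (fun w : Fin (n+1) → (𝒳 × 𝒴 × Finset ι) => w ∘ σ) :=
        measurable_pi_lambda _ (fun j => measurable_pi_apply (σ j))
      have hpre : (fun w : Fin (n+1) → (𝒳 × 𝒴 × Finset ι) => w ∘ σ) ⁻¹' (Bset (Fin.last n)) = Bset m := by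
        ext w
        simp only [mem_preimage, hBset, mem_setOf_eq]
        have hcnteq : cnt (w ∘ σ) (Fin.last n) = cnt w m := by
          simp only [hcnt, Function.comp_apply]
          have hlast : σ (Fin.last n) = m := Equiv.swap_apply_right _ _
          simp only [hlast]
          rw [Finset.card_filter, Finset.card_filter]
          exact Equiv.sum_comp σ (fun j => if T (w j) < T (w m) then 1 else 0)
        simp only [hcnteq]
      have hmp : MeasurePreserving (fun w : Fin (n+1) → (𝒳 × 𝒴 × Finset ι) => w ∘ σ) ν ν :=
        ⟨hmeascomp, by rw [hν]; exact pi_map_comp_equiv μ σ⟩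
      calc ν (Bset m) = ν ((fun w : Fin (n+1) → (𝒳 × 𝒴 × Finset ι) => w ∘ σ) ⁻¹' (Bset (Fin.last n))) :=
            (congrArg (fun u => ν u) hpre).symm
        _ = ν (Bset (Fin.last n)) := hmp.measure_preimage (hBmeas (Fin.last n)).nullMeasurableSet
    have hsum : ((n + 1 : ℕ) : ℝ≥0∞) * ν (Bset (Fin.last n)) ≤ ((n + 1 - k : ℕ) : ℝ≥0∞) := by
      have hsum1 : ∑ m : Fin (n+1), ν (Bset m) = ((n + 1 : ℕ) : ℝ≥0∞) * ν (Bset (Fin.last n)) := by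
        rw [Finset.sum_congr rfl (fun m _ => hswap m)]
        rw [Finset.sum_const, Finset.card_univ, Fintype.card_fin, nsmul_eq_mul]
      have hsum2 : ∑ m : Fin (n+1), ν (Bset m)
          = ∫⁻ w, ∑ m : Fin (n+1), (Bset m).indicator (1 : (Fin (n+1) → 𝒳 × 𝒴 × Finset ι) → ℝ≥0∞) w ∂ν := by
        rw [lintegral_finset_sum _ (fun m _ => (measurable_one.indicator (hBmeas m)))]
        exact Finset.sum_congr rfl (fun m _ => (lintegral_indicator_one (hBmeas m)).symm)
      have hpoint : ∀ w, ∑ m : Fin (n+1), (Bset m).indicator (1 : (Fin (n+1) → 𝒳 × 𝒴 × Finset ι) → ℝ≥0∞) w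
          ≤ ((n + 1 - k : ℕ) : ℝ≥0∞) := by
        intro w
        have heq : ∑ m : Fin (n+1), (Bset m).indicator (1 : (Fin (n+1) → 𝒳 × 𝒴 × Finset ι) → ℝ≥0∞) w
            = ((Finset.univ.filter (fun m => k ≤ cnt w m)).card : ℝ≥0∞) := by
          rw [← Finset.sum_boole]
          apply Finset.sum_congr rfl
          intro m _
          by_cases hm : k ≤ cnt w m
          · rw [Set.indicator_of_mem (show w ∈ Bset m from hm), if_pos hm, Pi.one_apply]
          · rw [Set.indicator_of_notMem (show w ∉ Bset m from hm), if_neg hm]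
        rw [heq]
        have := count_ge_bound (fun j => T (w j)) hkn1
        exact_mod_cast this
      calc ((n + 1 : ℕ) : ℝ≥0∞) * ν (Bset (Fin.last n))
          = ∫⁻ w, ∑ m : Fin (n+1), (Bset m).indicator (1 : (Fin (n+1) → 𝒳 × 𝒴 × Finset ι) → ℝ≥0∞) w ∂ν := by
            rw [← hsum2, hsum1]
        _ ≤ ∫⁻ _, ((n + 1 - k : ℕ) : ℝ≥0∞) ∂ν := lintegral_mono hpoint
        _ = ((n + 1 - k : ℕ) : ℝ≥0∞) := by
            rw [lintegral_const, measure_univ, mul_one]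
    -- pass to real numbers
    set p := (ν (Bset (Fin.last n))).toReal with hp
    have hνfin : ν (Bset (Fin.last n)) ≠ ⊤ := measure_ne_top _ _
    have hple : ((n:ℝ) + 1) * p ≤ (n:ℝ) + 1 - (k:ℝ) := by
      have h1 : (((n + 1 : ℕ) : ℝ≥0∞) * ν (Bset (Fin.last n))).toReal
          ≤ (((n + 1 - k : ℕ) : ℝ≥0∞)).toReal :=
        ENNReal.toReal_mono (ENNReal.natCast_ne_top _) hsum
      rw [ENNReal.toReal_mul, ENNReal.toReal_natCast, ENNReal.toReal_natCast] at h1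
      have h2 : ((n + 1 - k : ℕ) : ℝ) = (n:ℝ) + 1 - (k:ℝ) := by
        rw [Nat.cast_sub hkn1]
        push_cast
        ring
      rw [h2] at h1
      calc ((n:ℝ) + 1) * p = ((n + 1 : ℕ):ℝ) * p := by push_cast; ring
        _ ≤ (n:ℝ) + 1 - (k:ℝ) := h1
    -- the good event
    set M := {ω | ∀ lam₁ lam₂, 0 ≤ lam₁ → lam₁ ≤ lam₂ →
      fpp φ s (Z (Fin.last n) ω) lam₂ ≤ fpp φ s (Z (Fin.last n) ω) lam₁} with hM
    set A : Set Ω := F ⁻¹' (Bset (Fin.last n))ᶜ with hA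
    have hPA : P A = ν (Bset (Fin.last n))ᶜ := by
      rw [hA, hjoint, Measure.map_apply hFmeas (hBmeas (Fin.last n)).compl]
    set G := {ω | fpp φ s (Z (Fin.last n) ω) (lamhat ω + eps) ≤ δ} with hG
    have hsubG : A ∩ M ⊆ G := by
      rintro ω ⟨hωA, hωM⟩
      have hcnt' : cnt (F ω) (Fin.last n) < k := not_le.1 hωA
      have hSeq : ∀ j : Fin n, S ω j = T (Z j.castSucc ω) := fun j => hS ω j
      have hcnt2 : (Finset.univ.filter
          (fun j : Fin n => S ω j < T (Z (Fin.last n) ω))).card < k := by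
        have hrw : cnt (F ω) (Fin.last n)
            = (Finset.univ.filter (fun j : Fin n => S ω j < T (Z (Fin.last n) ω))).card := by
          simp only [hcnt]
          rw [Finset.card_filter, Finset.card_filter, Fin.sum_univ_castSucc]
          have hlastzero : (if T (F ω (Fin.last n)) < T (F ω (Fin.last n)) then 1 else 0) = 0 :=
            if_neg (lt_irrefl _)
          rw [hlastzero, add_zero]
          apply Finset.sum_congr rfl
          intro j _
          congr 1
          · simp only [hF, hSeq j]
        rw [← hrw]
        exact hcnt'
      have hle : T (Z (Fin.last n) ω) ≤ kthSmallest (S ω) k :=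
        le_kthSmallest_of_count hk1 hk (S ω) _ hcnt2
      have hlt : T (Z (Fin.last n) ω) < lamhat ω + eps := by
        rw [hlamhat ω]
        linarith
      obtain ⟨lam', hl0, hlδ, hlt'⟩ := (Tstat_lt_iff hφ hδ _ _).1 hlt
      exact le_trans (hωM lam' (lamhat ω + eps) (le_of_lt hl0) (le_of_lt hlt')) hlδ
    have hPle : P A ≤ P G := by
      have h1 : A ⊆ (A ∩ M) ∪ Mᶜ := by
        intro ω hω
        by_cases hm : ω ∈ M
        · exact Or.inl ⟨hω, hm⟩
        · exact Or.inr hm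
      have hMc : P Mᶜ = 0 := hMnull
      calc P A ≤ P ((A ∩ M) ∪ Mᶜ) := measure_mono h1
        _ ≤ P (A ∩ M) + P Mᶜ := measure_union_le _ _
        _ = P (A ∩ M) := by rw [hMc, add_zero]
        _ ≤ P G := measure_mono hsubG
    -- conclude
    have hPAval : (P A).toReal = 1 - p := by
      rw [hPA, measure_compl (hBmeas (Fin.last n)) hνfin, measure_univ,
        ENNReal.toReal_sub_of_le (by exact prob_le_one) ENNReal.one_ne_top]
      simp [hp]
    have htoReal : (P A).toReal ≤ (P G).toReal :=
      ENNReal.toReal_mono (measure_ne_top _ _) hPle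
    have hceil : (1 - α) * ((n:ℝ) + 1) ≤ (k:ℝ) := by
      have := Nat.le_ceil ((1 - α) * (n + 1 : ℝ))
      rw [← hkdef] at this
      push_cast at this ⊢
      linarith
    have hnpos : (0:ℝ) < (n:ℝ) + 1 := by positivity
    have hfinal : 1 - α ≤ 1 - p := by nlinarith
    calc (1:ℝ) - α ≤ 1 - p := hfinal
      _ = (P A).toReal := hPAval.symm
      _ ≤ (P G).toReal := htoReal
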